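/- Define F(σ,τ) = (1/(σ³τ))·(σ⁶(τ+1)³ + 3σ⁵(τ+1)²(2τ+1) + 3σ⁴(τ+1)²(5τ+1) + σ³(20τ³+42τ²+27τ+2) + 3σ²(τ+1)²(5τ+1) + 3σ(τ+1)²(2τ+1) + (τ+1)³). Then the function (u,v) ↦ F(eᵘ, eᵛ) is strictly convex along every non-constant affine line in ℝ². Consequently F has a unique critical point on ℝ²_{>0}. -/

import Mathlib

set_option maxHeartbeats 1000000

noncomputable def commutatorTrace (σ τ : ℝ) : ℝ :=
  (1 / (σ^3 * τ)) *
    (σ^6 * (τ+1)^3 + 3*σ^5 * (τ+1)^2 * (2*τ+1) + 3*σ^4 * (τ+1)^2 * (5*τ+1)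
      + σ^3 * (20*τ^3 + 42*τ^2 + 27*τ + 2) + 3*σ^2 * (τ+1)^2 * (5*τ+1)
      + 3*σ * (τ+1)^2 * (2*τ+1) + (τ+1)^3)

lemma repE (x y : ℝ) : commutatorTrace (Real.exp x) (Real.exp y) =
    1 * Real.exp (3*x + 2*y) + 3 * Real.exp (3*x + 1*y) + 3 * Real.exp (3*x + 0*y) + 1 * Real.exp (3*x + (-1)*y) + 6 * Real.exp (2*x + 2*y) + 15 * Real.exp (2*x + 1*y) + 12 * Real.exp (2*x + 0*y) + 3 * Real.exp (2*x + (-1)*y) + 15 * Real.exp (1*x + 2*y) + 33 * Real.exp (1*x + 1*y) + 21 * Real.exp (1*x + 0*y) + 3 * Real.exp (1*x + (-1)*y) + 20 * Real.exp (0*x + 2*y) + 42 * Real.exp (0*x + 1*y) + 27 * Real.exp (0*x + 0*y) + 2 * Real.exp (0*x + (-1)*y) + 15 * Real.exp ((-1)*x + 2*y) + 33 * Real.exp ((-1)*x + 1*y) + 21 * Real.exp ((-1)*x + 0*y) + 3 * Real.exp ((-1)*x + (-1)*y) + 6 * Real.exp ((-2)*x + 2*y) + 15 * Real.exp ((-2)*x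 + 1*y) + 12 * Real.exp ((-2)*x + 0*y) + 3 * Real.exp ((-2)*x + (-1)*y) + 1 * Real.exp ((-3)*x + 2*y) + 3 * Real.exp ((-3)*x + 1*y) + 3 * Real.exp ((-3)*x + 0*y) + 1 * Real.exp ((-3)*x + (-1)*y) := by
  have h3 : ∀ z : ℝ, Real.exp (3*z) = Real.exp z ^ 3 := fun z => by
    rw [show (3:ℝ)*z = z+z+z by ring, Real.exp_add, Real.exp_add]; ring
  have h2 : ∀ z : ℝ, Real.exp (2*z) = Real.exp z ^ 2 := fun z => by
    rw [show (2:ℝ)*z = z+z by ring, Real.exp_add]; ring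
  have h1 : ∀ z : ℝ, Real.exp (1*z) = Real.exp z := fun z => by rw [one_mul]
  have h0 : ∀ z : ℝ, Real.exp (0*z) = 1 := fun z => by rw [zero_mul, Real.exp_zero]
  have hm1 : ∀ z : ℝ, Real.exp ((-1)*z) = (Real.exp z)⁻¹ := fun z => by
    rw [show (-1:ℝ)*z = -z by ring, Real.exp_neg]
  have hm2 : ∀ z : ℝ, Real.exp ((-2)*z) = (Real.exp z ^ 2)⁻¹ := fun z => by
    rw [show (-2:ℝ)*z = -(2*z) by ring, Real.exp_neg, h2]
  have hm3 : ∀ z : ℝ, Real.exp ((-3)*z) = (Real.exp z ^ 3)⁻¹ := fun z => by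
    rw [show (-3:ℝ)*z = -(3*z) by ring, Real.exp_neg, h3]
  have hx := (Real.exp_pos x).ne'
  have hy := (Real.exp_pos y).ne'
  simp only [Real.exp_add, h3, h2, h1, h0, hm1, hm2, hm3, commutatorTrace]
  field_simp
  ring
open Set

lemma wcomb (θ l a b x y : ℝ) (hab : a + b = 1) :
    θ + l*(a*x + b*y) = a*(θ+l*x) + b*(θ+l*y) := by linear_combination (-θ) * hab

lemma convTerm (c θ l : ℝ) (hc : 0 ≤ c) :
    ConvexOn ℝ univ (fun t : ℝ => c * Real.exp (θ + l*t)) := by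
  refine ⟨convex_univ, fun x _ y _ a b ha hb hab => ?_⟩
  simp only [smul_eq_mul]
  have h := convexOn_exp.2 (mem_univ (θ + l*x)) (mem_univ (θ + l*y)) ha hb hab
  simp only [smul_eq_mul] at h
  rw [wcomb θ l a b x y hab]
  nlinarith [h]

lemma strictTerm (c θ l : ℝ) (hc : 0 < c) (hl : l ≠ 0) :
    StrictConvexOn ℝ univ (fun t : ℝ => c * Real.exp (θ + l*t)) := by
  refine ⟨convex_univ, fun x _ y _ hxy a b ha hb hab => ?_⟩
  simp only [smul_eq_mul]
  have hne : θ + l*x ≠ θ + l*y := by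
    intro h; exact hxy (mul_left_cancel₀ hl (by linarith))
  have h := strictConvexOn_exp.2 (mem_univ (θ + l*x)) (mem_univ (θ + l*y)) hne ha hb hab
  simp only [smul_eq_mul] at h
  rw [wcomb θ l a b x y hab]
  nlinarith [h]

lemma ConvexOn.fadd {f g : ℝ → ℝ} (hf : ConvexOn ℝ univ f) (hg : ConvexOn ℝ univ g) :
    ConvexOn ℝ univ (fun t => f t + g t) := hf.add hg

lemma sfadd {f g : ℝ → ℝ} (hf : StrictConvexOn ℝ univ f) (hg : ConvexOn ℝ univ g) :
    StrictConvexOn ℝ univ (fun t => f t + g t) := hf.add_convexOn hg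

lemma fsadd {f g : ℝ → ℝ} (hf : ConvexOn ℝ univ f) (hg : StrictConvexOn ℝ univ g) :
    StrictConvexOn ℝ univ (fun t => f t + g t) := hf.add_strictConvexOn hg

lemma part1 (u₀ v₀ b c : ℝ) (hbc : ¬ (b = 0 ∧ c = 0)) :
    StrictConvexOn ℝ Set.univ (fun t : ℝ =>
      commutatorTrace (Real.exp (u₀ + b*t)) (Real.exp (v₀ + c*t))) := by
  have hfun : (fun t : ℝ => commutatorTrace (Real.exp (u₀ + b*t)) (Real.exp (v₀ + c*t)))
      = fun t : ℝ => (1 * Real.exp ((3*u₀ + 2*v₀) + (3*b + 2*c)*t) + 1 * Real.exp (((-3)*u₀ + (-1)*v₀) + ((-3)*b + (-1)*c)*t)) + (3 * Real.exp ((3*u₀ + 1*v₀) + (3*b + 1*c)*t) + (3 * Real.exp ((3*u₀ + 0*v₀) + (3*b + 0*c)*t) + (1 * Real.exp ((3*u₀ + (-1)*v₀) + (3*b + (-1)*c)*t) + (6 * Real.exp ((2*u₀ + 2*v₀) + (2*b + 2*c)*t) + (15 * Real.exp ((2*u₀ + 1*v₀) + (2*b + 1*c)*t) + (12 * Real.exp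 ((2*u₀ + 0*v₀) + (2*b + 0*c)*t) + (3 * Real.exp ((2*u₀ + (-1)*v₀) + (2*b + (-1)*c)*t) + (15 * Real.exp ((1*u₀ + 2*v₀) + (1*b + 2*c)*t) + (33 * Real.exp ((1*u₀ + 1*v₀) + (1*b + 1*c)*t) + (21 * Real.exp ((1*u₀ + 0*v₀) + (1*b + 0*c)*t) + (3 * Real.exp ((1*u₀ + (-1)*v₀) + (1*b + (-1)*c)*t) + (20 * Real.exp ((0*u₀ + 2*v₀) + (0*b + 2*c)*t) + (42 * Real.exp ((0*u₀ + 1*v₀) + (0*b + 1*c)*t) + (27 * Real.exp ((0*u₀ + 0*v₀) + (0*b + 0*c)*t) + (2 * Real.exp ((0*u₀ + (-1)*v₀) + (0*b + (-1)*c)*t) + (15 * Real.exp (((-1)*u₀ + 2*v₀) + ((-1)*b + 2*c)*t) + (33 * Real.exp (((-1)*u₀ + 1*v₀) + ((-1)*b + 1*c)*t) + (21 * Real.exp (((-1)*u₀ + 0*v₀) + ((-1)*b + 0*c)*t) + (3 * Real.exp (((-1)*u₀ + (-1)*v₀) + ((-1)*b + (-1)*c)*t) + (6 * Real.exp (((-2)*u₀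 + 2*v₀) + ((-2)*b + 2*c)*t) + (15 * Real.exp (((-2)*u₀ + 1*v₀) + ((-2)*b + 1*c)*t) + (12 * Real.exp (((-2)*u₀ + 0*v₀) + ((-2)*b + 0*c)*t) + (3 * Real.exp (((-2)*u₀ + (-1)*v₀) + ((-2)*b + (-1)*c)*t) + (1 * Real.exp (((-3)*u₀ + 2*v₀) + ((-3)*b + 2*c)*t) + (3 * Real.exp (((-3)*u₀ + 1*v₀) + ((-3)*b + 1*c)*t) + (3 * Real.exp (((-3)*u₀ + 0*v₀) + ((-3)*b + 0*c)*t))))))))))))))))))))))))))) := by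
    funext t
    rw [repE]
    have aff : ∀ m n : ℝ, m*(u₀ + b*t) + n*(v₀ + c*t) = (m*u₀ + n*v₀) + (m*b + n*c)*t :=
      fun m n => by ring
    simp only [aff]
    ring
  rw [hfun]
  have hrest : ConvexOn ℝ Set.univ (fun t : ℝ => 3 * Real.exp ((3*u₀ + 1*v₀) + (3*b + 1*c)*t) + (3 * Real.exp ((3*u₀ + 0*v₀) + (3*b + 0*c)*t) + (1 * Real.exp ((3*u₀ + (-1)*v₀) + (3*b + (-1)*c)*t) + (6 * Real.exp ((2*u₀ + 2*v₀) + (2*b + 2*c)*t) + (15 * Real.exp ((2*u₀ + 1*v₀) + (2*b + 1*c)*t) + (12 * Real.exp ((2*u₀ + 0*v₀) + (2*b + 0*c)*t) + (3 * Real.exp ((2*u₀ + (-1)*v₀) + (2*b + (-1)*c)*t) + (15 * Real.exp ((1*u₀ + 2*v₀) + (1*b + 2*c)*t) + (33 * Real.exp ((1*u₀ + 1*v₀) + (1*b + 1*c)*t) + (21 * Real.exp ((1*u₀ + 0*v₀) + (1*b + 0*c)*t) + (3 * Real.exp ((1*u₀ + (-1)*v₀) + (1*b + (-1)*c)*t)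 + (20 * Real.exp ((0*u₀ + 2*v₀) + (0*b + 2*c)*t) + (42 * Real.exp ((0*u₀ + 1*v₀) + (0*b + 1*c)*t) + (27 * Real.exp ((0*u₀ + 0*v₀) + (0*b + 0*c)*t) + (2 * Real.exp ((0*u₀ + (-1)*v₀) + (0*b + (-1)*c)*t) + (15 * Real.exp (((-1)*u₀ + 2*v₀) + ((-1)*b + 2*c)*t) + (33 * Real.exp (((-1)*u₀ + 1*v₀) + ((-1)*b + 1*c)*t) + (21 * Real.exp (((-1)*u₀ + 0*v₀) + ((-1)*b + 0*c)*t) + (3 * Real.exp (((-1)*u₀ + (-1)*v₀) + ((-1)*b + (-1)*c)*t) + (6 * Real.exp (((-2)*u₀ + 2*v₀) + ((-2)*b + 2*c)*t) + (15 * Real.exp (((-2)*u₀ + 1*v₀) + ((-2)*b + 1*c)*t) + (12 * Real.exp (((-2)*u₀ + 0*v₀) + ((-2)*b + 0*c)*t) + (3 * Real.exp (((-2)*u₀ + (-1)*v₀) + ((-2)*b + (-1)*c)*t) + (1 * Real.exp (((-3)*u₀ + 2*v₀) + ((-3)*b + 2*c)*t) + (3 * Real.exp (((-3)*u₀ + 1*v₀)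 + ((-3)*b + 1*c)*t) + (3 * Real.exp (((-3)*u₀ + 0*v₀) + ((-3)*b + 0*c)*t))))))))))))))))))))))))))) := ((convTerm 3 _ _ (by norm_num)).fadd ((convTerm 3 _ _ (by norm_num)).fadd ((convTerm 1 _ _ (by norm_num)).fadd ((convTerm 6 _ _ (by norm_num)).fadd ((convTerm 15 _ _ (by norm_num)).fadd ((convTerm 12 _ _ (by norm_num)).fadd ((convTerm 3 _ _ (by norm_num)).fadd ((convTerm 15 _ _ (by norm_num)).fadd ((convTerm 33 _ _ (by norm_num)).fadd ((convTerm 21 _ _ (by norm_num)).fadd ((convTerm 3 _ _ (by norm_num)).fadd ((convTerm 20 _ _ (by norm_num)).fadd ((convTerm 42 _ _ (by norm_num)).fadd ((convTerm 27 _ _ (by norm_num)).fadd ((convTerm 2 _ _ (by norm_num)).fadd ((convTerm 15 _ _ (by norm_num)).fadd ((convTerm 33 _ _ (by norm_num)).fadd ((convTerm 21 _ _ (by norm_num)).fadd ((convTerm 3 _ _ (by norm_num)).fadd ((convTerm 6 _ _ (by norm_num)).fadd ((convTerm 15 _ _ (by norm_num)).fadd ((convTerm 12 _ _ (by norm_num)).fadd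 ((convTerm 3 _ _ (by norm_num)).fadd ((convTerm 1 _ _ (by norm_num)).fadd ((convTerm 3 _ _ (by norm_num)).fadd (convTerm 3 _ _ (by norm_num)))))))))))))))))))))))))))
  have hpair : StrictConvexOn ℝ Set.univ (fun t : ℝ => (1 * Real.exp ((3*u₀ + 2*v₀) + (3*b + 2*c)*t) + 1 * Real.exp (((-3)*u₀ + (-1)*v₀) + ((-3)*b + (-1)*c)*t))) := by
    by_cases h1 : 3*b + 2*c = 0
    · have h2 : (-3)*b + (-1)*c ≠ 0 := by
        intro h2
        exact hbc ⟨by linarith, by linarith⟩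
      exact fsadd (convTerm 1 _ _ (by norm_num)) (strictTerm 1 _ _ one_pos h2)
    · exact sfadd (strictTerm 1 _ _ one_pos h1) (convTerm 1 _ _ (by norm_num))
  exact sfadd hpair hrest

lemma diffF {p : ℝ × ℝ} (h1 : p.1 ≠ 0) (h2 : p.2 ≠ 0) :
    DifferentiableAt ℝ (fun q : ℝ × ℝ => commutatorTrace q.1 q.2) p := by
  unfold commutatorTrace
  fun_prop (disch := simp [h1, h2, pow_ne_zero, mul_ne_zero])

lemma fderiv_eq_zero_of_slices {f : ℝ × ℝ → ℝ} {p : ℝ × ℝ}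
    (hd : DifferentiableAt ℝ f p)
    (h1 : HasDerivAt (fun s => f (s, p.2)) 0 p.1)
    (h2 : HasDerivAt (fun s => f (p.1, s)) 0 p.2) :
    fderiv ℝ f p = 0 := by
  have hf : HasFDerivAt f (fderiv ℝ f p) (p.1, p.2) := by
    simpa using hd.hasFDerivAt
  have c1 : HasDerivAt (fun s : ℝ => (s, p.2)) ((1:ℝ), (0:ℝ)) p.1 :=
    HasDerivAt.prodMk (hasDerivAt_id p.1) (hasDerivAt_const _ _)
  have c2 : HasDerivAt (fun s : ℝ => (p.1, s)) ((0:ℝ), (1:ℝ)) p.2 :=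
    HasDerivAt.prodMk (hasDerivAt_const _ _) (hasDerivAt_id p.2)
  have g1 : HasDerivAt (fun s => f (s, p.2)) (fderiv ℝ f p (1, 0)) p.1 :=
    hf.comp_hasDerivAt p.1 c1
  have g2 : HasDerivAt (fun s => f (p.1, s)) (fderiv ℝ f p (0, 1)) p.2 :=
    hf.comp_hasDerivAt p.2 c2
  have e1 : fderiv ℝ f p (1, 0) = 0 := g1.unique h1
  have e2 : fderiv ℝ f p (0, 1) = 0 := g2.unique h2
  ext
  · simpa using e1
  · simpa using e2
lemma sliceSigma (τ : ℝ) (hτ : τ ≠ 0) :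
    HasDerivAt (fun s => commutatorTrace s τ) 0 1 := by
  have heq : (fun s => commutatorTrace s τ) = fun s : ℝ =>
      (s^6 * (τ+1)^3 + (3*(τ+1)^2*(2*τ+1)) * s^5 + (3*(τ+1)^2*(5*τ+1)) * s^4
        + (20*τ^3 + 42*τ^2 + 27*τ + 2) * s^3 + (3*(τ+1)^2*(5*τ+1)) * s^2
        + (3*(τ+1)^2*(2*τ+1)) * s^1 + (τ+1)^3) / (τ * s^3) := by
    funext s
    unfold commutatorTrace
    ring
  rw [heq]
  have hP : HasDerivAt (fun s : ℝ =>
      s^6 * (τ+1)^3 + (3*(τ+1)^2*(2*τ+1)) * s^5 + (3*(τ+1)^2*(5*τ+1)) * s^4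
        + (20*τ^3 + 42*τ^2 + 27*τ + 2) * s^3 + (3*(τ+1)^2*(5*τ+1)) * s^2
        + (3*(τ+1)^2*(2*τ+1)) * s^1 + (τ+1)^3)
      (((6:ℕ):ℝ) * 1^(6-1) * (τ+1)^3 + (3*(τ+1)^2*(2*τ+1)) * (((5:ℕ):ℝ) * 1^(5-1))
        + (3*(τ+1)^2*(5*τ+1)) * (((4:ℕ):ℝ) * 1^(4-1))
        + (20*τ^3 + 42*τ^2 + 27*τ + 2) * (((3:ℕ):ℝ) * 1^(3-1))
        + (3*(τ+1)^2*(5*τ+1)) * (((2:ℕ):ℝ) * 1^(2-1))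
        + (3*(τ+1)^2*(2*τ+1)) * (((1:ℕ):ℝ) * 1^(1-1)) + 0) 1 := by
    exact (((((((hasDerivAt_pow 6 1).mul_const _).add
      (((hasDerivAt_pow 5 1).const_mul _))).add
      (((hasDerivAt_pow 4 1).const_mul _))).add
      (((hasDerivAt_pow 3 1).const_mul _))).add
      (((hasDerivAt_pow 2 1).const_mul _))).add
      (((hasDerivAt_pow 1 1).const_mul _))).add (hasDerivAt_const _ _)
  have hQ : HasDerivAt (fun s : ℝ => τ * s^3) (τ * (((3:ℕ):ℝ) * 1^(3-1))) 1 :=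
    (hasDerivAt_pow 3 1).const_mul τ
  have hQne : τ * (1:ℝ)^3 ≠ 0 := by simpa using hτ
  have hd := hP.div hQ hQne
  refine hd.congr_deriv (Eq.symm ?_)
  rw [eq_comm, div_eq_zero_iff]
  left
  norm_num
  ring
lemma sliceTau (t0 : ℝ) (ht0 : t0 ≠ 0) (hroot : 8*t0^2 + t0 - 1 = 0) :
    HasDerivAt (fun τ => commutatorTrace 1 τ) 0 t0 := by
  have heq : (fun τ => commutatorTrace 1 τ) = fun τ : ℝ =>
      (64*τ^3 + 144*τ^2 + 99*τ^1 + 16) / (τ^1) := by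
    funext τ
    unfold commutatorTrace
    ring
  rw [heq]
  have hP : HasDerivAt (fun τ : ℝ => 64*τ^3 + 144*τ^2 + 99*τ^1 + 16)
      (64 * (((3:ℕ):ℝ) * t0^(3-1)) + 144 * (((2:ℕ):ℝ) * t0^(2-1))
        + 99 * (((1:ℕ):ℝ) * t0^(1-1)) + 0) t0 :=
    ((((hasDerivAt_pow 3 t0).const_mul _).add
      ((hasDerivAt_pow 2 t0).const_mul _)).add
      ((hasDerivAt_pow 1 t0).const_mul _)).add (hasDerivAt_const _ _)
  have hQ : HasDerivAt (fun τ : ℝ => τ^1) (((1:ℕ):ℝ) * t0^(1-1)) t0 := hasDerivAt_pow 1 t0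
  have hQne : t0^1 ≠ 0 := by simpa using ht0
  have hd := hP.div hQ hQne
  refine hd.congr_deriv (Eq.symm ?_)
  rw [eq_comm, div_eq_zero_iff]
  left
  norm_num
  linear_combination (16*t0 + 16) * hroot

lemma t0_pos : 0 < (Real.sqrt 33 - 1) / 16 := by
  have h33 : Real.sqrt 33 ^ 2 = 33 := Real.sq_sqrt (by norm_num)
  nlinarith [Real.sqrt_nonneg 33]

lemma t0_root : 8*((Real.sqrt 33 - 1) / 16)^2 + ((Real.sqrt 33 - 1) / 16) - 1 = 0 := by
  have h33 : Real.sqrt 33 ^ 2 = 33 := Real.sq_sqrt (by norm_num)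
  linear_combination (1/32) * h33

theorem commutator_trace_strictly_convex_unique_crit :
    (∀ u₀ v₀ b c : ℝ, ¬ (b = 0 ∧ c = 0) →
      StrictConvexOn ℝ Set.univ (fun t : ℝ =>
        commutatorTrace (Real.exp (u₀ + b*t)) (Real.exp (v₀ + c*t)))) ∧
    (∃! p : ℝ × ℝ, (0 < p.1 ∧ 0 < p.2) ∧
      fderiv ℝ (fun q : ℝ × ℝ => commutatorTrace q.1 q.2) p = 0) := by
  constructor
  · exact part1
  · set F : ℝ × ℝ → ℝ := fun q : ℝ × ℝ => commutatorTrace q.1 q.2 with hF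
    -- any two critical points coincide
    have key : ∀ p q : ℝ × ℝ, ((0 < p.1 ∧ 0 < p.2) ∧ fderiv ℝ F p = 0) →
        ((0 < q.1 ∧ 0 < q.2) ∧ fderiv ℝ F q = 0) → p = q := by
      rintro p q ⟨⟨hp1, hp2⟩, hdp⟩ ⟨⟨hq1, hq2⟩, hdq⟩
      by_contra hne
      set u₀ := Real.log p.1
      set v₀ := Real.log p.2
      set b := Real.log q.1 - Real.log p.1 with hb
      set c := Real.log q.2 - Real.log p.2 with hc
      have hbc : ¬ (b = 0 ∧ c = 0) := by
        rintro ⟨h1, h2⟩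
        apply hne
        have e1 : p.1 = q.1 := by
          have := sub_eq_zero.mp h1
          calc p.1 = Real.exp (Real.log p.1) := (Real.exp_log hp1).symm
          _ = Real.exp (Real.log q.1) := by rw [this]
          _ = q.1 := Real.exp_log hq1
        have e2 : p.2 = q.2 := by
          have := sub_eq_zero.mp h2
          calc p.2 = Real.exp (Real.log p.2) := (Real.exp_log hp2).symm
          _ = Real.exp (Real.log q.2) := by rw [this]
          _ = q.2 := Real.exp_log hq2
        exact Prod.ext e1 e2
      set g : ℝ → ℝ := fun t => commutatorTrace (Real.exp (u₀ + b*t)) (Real.exp (v₀ + c*t))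
        with hg
      have hstrict := part1 u₀ v₀ b c hbc
      -- the curve
      have hγ : ∀ t : ℝ, HasDerivAt (fun t : ℝ => (Real.exp (u₀ + b*t), Real.exp (v₀ + c*t)))
          (Real.exp (u₀ + b*t) * b, Real.exp (v₀ + c*t) * c) t := by
        intro t
        have h1 : HasDerivAt (fun t : ℝ => u₀ + b*t) b t := by
          exact (((hasDerivAt_id t).const_mul b).const_add u₀).congr_deriv (mul_one b)
        have h2 : HasDerivAt (fun t : ℝ => v₀ + c*t) c t := by
          exact (((hasDerivAt_id t).const_mul c).const_add v₀).congr_deriv (mul_one c)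
        exact HasDerivAt.prodMk (h1.exp) (h2.exp)
      have hγ0 : (Real.exp (u₀ + b*0), Real.exp (v₀ + c*0)) = p := by
        have : u₀ + b*0 = Real.log p.1 := by ring
        have e2 : v₀ + c*0 = Real.log p.2 := by ring
        rw [this, e2, Real.exp_log hp1, Real.exp_log hp2]
      have hγ1 : (Real.exp (u₀ + b*1), Real.exp (v₀ + c*1)) = q := by
        have e1 : u₀ + b*1 = Real.log q.1 := by rw [hb]; ring
        have e2 : v₀ + c*1 = Real.log q.2 := by rw [hc]; ring
        rw [e1, e2, Real.exp_log hq1, Real.exp_log hq2]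
      have hdg : ∀ t : ℝ, DifferentiableAt ℝ g t := by
        intro t
        have hdF : DifferentiableAt ℝ F (Real.exp (u₀ + b*t), Real.exp (v₀ + c*t)) :=
          diffF (Real.exp_pos (u₀ + b*t)).ne' (Real.exp_pos (v₀ + c*t)).ne'
        exact hdF.comp t (hγ t).differentiableAt
      have hF0 : HasFDerivAt F (0 : ℝ × ℝ →L[ℝ] ℝ) p := by
        have := (diffF hp1.ne' hp2.ne').hasFDerivAt
        rwa [hdp] at this
      have hF1 : HasFDerivAt F (0 : ℝ × ℝ →L[ℝ] ℝ) q := by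
        have := (diffF hq1.ne' hq2.ne').hasFDerivAt
        rwa [hdq] at this
      have hg0 : HasDerivAt g 0 0 := by
        have h := (hγ0 ▸ hF0).comp_hasDerivAt 0 (hγ 0)
        exact h.congr_deriv (by simp)
      have hg1 : HasDerivAt g 0 1 := by
        have h := (hγ1 ▸ hF1).comp_hasDerivAt 1 (hγ 1)
        exact h.congr_deriv (by simp)
      have hmono := hstrict.strictMonoOn_deriv (fun x _ => hdg x)
      have hlt := hmono (Set.mem_univ (0:ℝ)) (Set.mem_univ (1:ℝ)) one_pos
      rw [hg0.deriv, hg1.deriv] at hlt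
      exact lt_irrefl 0 hlt
    refine ⟨(1, (Real.sqrt 33 - 1) / 16), ⟨⟨one_pos, t0_pos⟩, ?_⟩, fun q hq => ?_⟩
    · apply fderiv_eq_zero_of_slices
      · exact diffF one_ne_zero t0_pos.ne'
      · exact sliceSigma _ t0_pos.ne'
      · exact sliceTau _ t0_pos.ne' t0_root
    · apply key q (1, (Real.sqrt 33 - 1) / 16) hq
      refine ⟨⟨one_pos, t0_pos⟩, ?_⟩
      apply fderiv_eq_zero_of_slices
      · exact diffF one_ne_zero t0_pos.ne'
      · exact sliceSigma _ t0_pos.ne'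
      · exact sliceTau _ t0_pos.ne' t0_root
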